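/- For every (x, y, z) ∈ ℂ³ with (x, y, z) ≠ (0, 0, 0), there exist vectors v₁, v₂, v₃ ∈ ℂ² that span ℂ² and satisfy det(v₁, v₂) = x, det(v₁, v₃) = y, and det(v₂, v₃) = z, where det(a, b) denotes the determinant of the 2×2 matrix with columns a, b. -/

import Mathlib

open Matrix

/-- `det₂ x y` is the determinant of the `2×2` matrix with columns `x` and `y`. -/
def det₂ (x y : Fin 2 → ℂ) : ℂ := Matrix.det !![x 0, y 0; x 1, y 1]

lemma span_pair_top (a b : Fin 2 → ℂ) (h : a 0 * b 1 - a 1 * b 0 ≠ 0) :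
    Submodule.span ℂ {a, b} = ⊤ := by
  rw [eq_top_iff]
  rintro w -
  have hw : w = ((w 0 * b 1 - w 1 * b 0)/(a 0 * b 1 - a 1 * b 0)) • a
      + ((a 0 * w 1 - a 1 * w 0)/(a 0 * b 1 - a 1 * b 0)) • b := by
    funext i
    fin_cases i <;> simp [Pi.add_apply] <;> field_simp [show b 1 * a 0 - b 0 * a 1 ≠ 0 by rwa [mul_comm (b 1), mul_comm (b 0)]] <;> ring
  rw [hw]
  exact Submodule.add_mem _
    (Submodule.smul_mem _ _ (Submodule.subset_span (by simp)))
    (Submodule.smul_mem _ _ (Submodule.subset_span (by simp)))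

/-- Every nonzero `(x, y, z) ∈ ℂ³` is realized as the triple of pairwise
determinants of a spanning triple of vectors in `ℂ²`. -/
theorem pairwise_dets_surjective
    (x y z : ℂ) (h : (x, y, z) ≠ (0, 0, 0)) :
    ∃ v₁ v₂ v₃ : Fin 2 → ℂ,
      Submodule.span ℂ {v₁, v₂, v₃} = ⊤ ∧
      det₂ v₁ v₂ = x ∧ det₂ v₁ v₃ = y ∧ det₂ v₂ v₃ = z := by
  by_cases hx : x ≠ 0
  · refine ⟨![1, 0], ![0, x], ![-z/x, y], ?_, ?_, ?_, ?_⟩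
    · rw [eq_top_iff]
      refine le_trans ?_ (Submodule.span_mono (s := {![1,0], ![0,x]}) ?_)
      · rw [span_pair_top] <;> simp [hx]
      · intro u hu; simp only [Set.mem_insert_iff, Set.mem_singleton_iff] at hu ⊢; tauto
    all_goals simp [det₂, Matrix.det_fin_two_of]; try field_simp
  by_cases hy : y ≠ 0
  · push_neg at hx
    refine ⟨![1, 0], ![z/y, 0], ![0, y], ?_, ?_, ?_, ?_⟩
    · rw [eq_top_iff]
      refine le_trans ?_ (Submodule.span_mono (s := {![1,0], ![0,y]}) ?_)
      · rw [span_pair_top] <;> simp [hy]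
      · intro u hu; simp only [Set.mem_insert_iff, Set.mem_singleton_iff] at hu ⊢; tauto
    all_goals simp [det₂, Matrix.det_fin_two_of, hx]; try field_simp
  · push_neg at hx hy
    have hz : z ≠ 0 := by
      intro hz; exact h (by simp [hx, hy, hz])
    refine ⟨0, ![1, 0], ![0, z], ?_, ?_, ?_, ?_⟩
    · rw [eq_top_iff]
      refine le_trans ?_ (Submodule.span_mono (s := {![1,0], ![0,z]}) ?_)
      · rw [span_pair_top] <;> simp [hz]
      · intro u hu; simp only [Set.mem_insert_iff, Set.mem_singleton_iff] at hu ⊢; tauto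
    all_goals simp [det₂, Matrix.det_fin_two_of, hx, hy]
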